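/- arXiv:1401.5691 — 16 statements merged into one kernel-verified Lean document; each statement's English description precedes it below -/
import Mathlib

section
/- Fix w, v : ℤ² → ℝ related by the point transformation v_{n,m} = √3·w_{n,m} − 1 for all (n,m) ∈ ℤ². Then v satisfies equation (Quadrelli1) with parameter τ = 0, namely v_{n,m} + v_{n+1,m+1} + 2(v_{n+1,m} + v_{n,m+1}) + (1+τ)·v_{n+1,m}v_{n,m+1} + τ·(v_{n+1,m}v_{n+1,m+1} + v_{n,m}v_{n,m+1}) + v_{n,m+1}v_{n+1,m+1} + v_{n,m}v_{n+1,m} + τ·v_{n+1,m}v_{n,m+1}(v_{n,m} + v_{n+1,m+1}) = 0 with τ = 0 for all (n,m) ∈ ℤ², if and only if w satisfies equation (kj1): w_{n,m} w_{n+1,m} + w_{n+1,m} w_{n,m+1} + w_{n,m+1} w_{n+1,m+1} − 1 = 0 for all (n,m) ∈ ℤ². -/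
/-- Equation (Quadrelli1) with real parameter τ for a field `v : ℤ² → ℝ`. -/
def Quadrelli1 (τ : ℝ) (v : ℤ → ℤ → ℝ) : Prop :=
  ∀ n m : ℤ,
    v n m + v (n+1) (m+1) + 2 * (v (n+1) m + v n (m+1))
      + (1 + τ) * (v (n+1) m * v n (m+1))
      + τ * (v (n+1) m * v (n+1) (m+1) + v n m * v n (m+1))
      + v n (m+1) * v (n+1) (m+1) + v n m * v (n+1) m
      + τ * (v (n+1) m * v n (m+1) * (v n m + v (n+1) (m+1))) = 0

/-- Equation (kj1) for a field `w : ℤ² → ℝ`. -/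
def Kj1 (w : ℤ → ℤ → ℝ) : Prop :=
  ∀ n m : ℤ,
    w n m * w (n+1) m + w (n+1) m * w n (m+1)
      + w n (m+1) * w (n+1) (m+1) - 1 = 0

theorem quadrelli1_tau_zero_iff_kj1 (w v : ℤ → ℤ → ℝ)
    (hv : ∀ n m : ℤ, v n m = Real.sqrt 3 * w n m - 1) :
    Quadrelli1 0 v ↔ Kj1 w := by
  have h3 : Real.sqrt 3 * Real.sqrt 3 = 3 := Real.mul_self_sqrt (by norm_num)
  constructor <;> intro h n m <;> have hh := h n m <;>
    simp only [hv] at hh ⊢ <;> nlinarith [hh, h3]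
end

section
/- Fix w, v : ℤ² → ℝ related by the point transformation v_{n,m} = −(2^{1/3}·w_{n,m} + 1) for all (n,m) ∈ ℤ². Then v satisfies equation (Quadrelli1) with parameter τ = 1 for all (n,m) ∈ ℤ², if and only if w satisfies equation (jk2): w_{n+1,m} w_{n,m+1} (w_{n,m} + w_{n+1,m+1}) + 1 = 0 for all (n,m) ∈ ℤ². -/
/-- Equation (jk2) for a field `w : ℤ² → ℝ`. -/
def Jk2 (w : ℤ → ℤ → ℝ) : Prop :=
  ∀ n m : ℤ,
    w (n+1) m * w n (m+1) * (w n m + w (n+1) (m+1)) + 1 = 0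

theorem quadrelli1_tau_one_iff_jk2 (w v : ℤ → ℤ → ℝ)
    (hv : ∀ n m : ℤ, v n m = -((2 : ℝ) ^ ((1 : ℝ)/3) * w n m + 1)) :
    Quadrelli1 1 v ↔ Jk2 w := by
  have hc : ((2 : ℝ) ^ ((1 : ℝ)/3)) ^ 3 = 2 := by
    rw [← Real.rpow_natCast ((2:ℝ) ^ ((1:ℝ)/3)) 3, ← Real.rpow_mul (by norm_num)]
    norm_num
  constructor
  · intro h n m
    have h1 := h n m
    simp only [hv] at h1
    linear_combination (-1/2 : ℝ) * h1
      - (w (n+1) m * w n (m+1) * (w n m + w (n+1) (m+1)) / 2) * hc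
  · intro h n m
    have h1 := h n m
    simp only [hv]
    linear_combination (-2 : ℝ) * h1
      - (w (n+1) m * w n (m+1) * (w n m + w (n+1) (m+1))) * hc
end

section
/- Let τ ∈ ℝ with τ ≠ 0 and τ ≠ 1, and fix w, v : ℤ² → ℝ related by the point transformation v_{n,m} = ((1−τ)/τ)·w_{n,m} − 1 for all (n,m) ∈ ℤ². Then v satisfies equation (Quadrelli1) with parameter τ for all (n,m) ∈ ℤ², if and only if w satisfies equation (jk3): w_{n,m} w_{n+1,m} + w_{n,m+1} w_{n+1,m+1} + w_{n+1,m} w_{n,m+1} (1 + w_{n,m} + w_{n+1,m+1}) + χ = 0 for all (n,m) ∈ ℤ², where χ = (τ−3)τ² / (1−τ)³. -/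
/-- Equation (jk3) with real parameter χ for a field `w : ℤ → ℤ → ℝ`. -/
def Jk3 (χ : ℝ) (w : ℤ → ℤ → ℝ) : Prop :=
  ∀ n m : ℤ,
    w n m * w (n+1) m + w n (m+1) * w (n+1) (m+1)
      + w (n+1) m * w n (m+1) * (1 + w n m + w (n+1) (m+1)) + χ = 0

lemma key_identity (τ : ℝ) (hτ0 : τ ≠ 0) (hτ1 : τ ≠ 1) (a b c d : ℝ)
    (A B C D : ℝ) (hA : A = ((1 - τ) / τ) * a - 1) (hB : B = ((1 - τ) / τ) * b - 1)
    (hC : C = ((1 - τ) / τ) * c - 1) (hD : D = ((1 - τ) / τ) * d - 1) :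
    A + D + 2 * (B + C) + (1 + τ) * (B * C) + τ * (B * D + A * C)
      + C * D + A * B + τ * (B * C * (A + D))
      = ((1 - τ) ^ 3 / τ ^ 2) *
        (a * b + c * d + b * c * (1 + a + d) + (τ - 3) * τ ^ 2 / (1 - τ) ^ 3) := by
  have h1 : (1 : ℝ) - τ ≠ 0 := sub_ne_zero.mpr (Ne.symm hτ1)
  subst hA hB hC hD
  field_simp
  ring

theorem quadrelli1_iff_jk3 (τ : ℝ) (hτ0 : τ ≠ 0) (hτ1 : τ ≠ 1)
    (w v : ℤ → ℤ → ℝ)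
    (hv : ∀ n m : ℤ, v n m = ((1 - τ) / τ) * w n m - 1) :
    Quadrelli1 τ v ↔ Jk3 ((τ - 3) * τ ^ 2 / (1 - τ) ^ 3) w := by
  have h1 : (1 : ℝ) - τ ≠ 0 := sub_ne_zero.mpr (Ne.symm hτ1)
  have hC : ((1 - τ) ^ 3 / τ ^ 2 : ℝ) ≠ 0 :=
    div_ne_zero (pow_ne_zero _ h1) (pow_ne_zero _ hτ0)
  constructor
  · intro h n m
    have hk := key_identity τ hτ0 hτ1 (w n m) (w (n+1) m) (w n (m+1)) (w (n+1) (m+1))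
      (v n m) (v (n+1) m) (v n (m+1)) (v (n+1) (m+1))
      (hv n m) (hv (n+1) m) (hv n (m+1)) (hv (n+1) (m+1))
    have := h n m
    rw [this] at hk
    have := (mul_eq_zero.mp hk.symm).resolve_left hC
    linarith [this]
  · intro h n m
    have hk := key_identity τ hτ0 hτ1 (w n m) (w (n+1) m) (w n (m+1)) (w (n+1) (m+1))
      (v n m) (v (n+1) m) (v n (m+1)) (v (n+1) (m+1))
      (hv n m) (hv (n+1) m) (hv n (m+1)) (hv (n+1) (m+1))
    rw [h n m, mul_zero] at hk
    linarith [hk]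
end

section
/- Let w : ℤ² → ℝ satisfy equation (kj1): w_{n,m} w_{n+1,m} + w_{n+1,m} w_{n,m+1} + w_{n,m+1} w_{n+1,m+1} − 1 = 0 for all (n,m) ∈ ℤ². Define the symmetry characteristic g_{n,m} := w_{n,m} (w_{n−1,m} w_{n,m} − 1) (w_{n,m} w_{n+1,m} − 1) (w_{n+2,m} w_{n+1,m} − w_{n−1,m} w_{n−2,m}). Then the linearized generalized-symmetry condition holds identically on solutions: for all (n,m) ∈ ℤ², g_{n,m}·w_{n+1,m} + g_{n+1,m}·(w_{n,m} + w_{n,m+1}) + g_{n,m+1}·(w_{n+1,m} + w_{n+1,m+1}) + g_{n+1,m+1}·w_{n,m+1} = 0. (These are the sum of the characteristic at each lattice point of the quad, weighted by the partial derivative of the left-hand side of (kj1) with respect to the field at that point; the identity expresses that g is a five-point generalized symmetry of (kj1) in the n-direction.) -/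
/-- The five-point symmetry characteristic (Carandini2) in the n-direction
is a generalized symmetry of (kj1): the linearized symmetry condition holds
identically on solutions. -/
theorem kj1_symmetry_n_direction (w : ℤ → ℤ → ℝ) (hw : Kj1 w)
    (g : ℤ → ℤ → ℝ)
    (hg : ∀ n m : ℤ, g n m =
      w n m * (w (n-1) m * w n m - 1) * (w n m * w (n+1) m - 1)
        * (w (n+2) m * w (n+1) m - w (n-1) m * w (n-2) m)) :
    ∀ n m : ℤ,
      g n m * w (n+1) m + g (n+1) m * (w n m + w n (m+1))
        + g n (m+1) * (w (n+1) m + w (n+1) (m+1))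
        + g (n+1) (m+1) * w n (m+1) = 0 := by
  intro n m
  have h1 := hw (n-2) m
  rw [show n-2+1 = n-1 from by ring] at h1
  have h2 := hw (n-1) m
  rw [show n-1+1 = n from by ring] at h2
  have h3 := hw n m
  have h4 := hw (n+1) m
  rw [show n+1+1 = n+2 from by ring] at h4
  have h5 := hw (n+2) m
  rw [show n+2+1 = n+3 from by ring] at h5
  rw [hg n m, hg (n+1) m, hg n (m+1), hg (n+1) (m+1)]
  rw [show n+1-1 = n from by ring, show n+1+1 = n+2 from by ring,
      show n+1+2 = n+3 from by ring, show n+1-2 = n-1 from by ring]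
  linear_combination (-w n m*w (n+1) m + w n m*w n m*w (n+1) m*w (n+1) m + w (n-1) m*w n m*w n m*w (n+1) m - w (n-1) m*w n m*w n m*w n m*w (n+1) m*w (n+1) m) * h1 + (-w (n+1) m*w n (m+1) + w (n+1) m*w (n-2) (m+1)*w (n-1) (m+1)*w n (m+1) + w (n+1) m*w (n+1) m*w (n+2) m*w n (m+1) + w n m*w (n+1) m*w (n+1) m*w n (m+1) - w n m*w (n+1) m*w (n+1) m*w (n-2) (m+1)*w (n-1) (m+1)*w n (m+1) - w n m*w (n+1) m*w (n+1) m*w (n+1) m*w (n+2) m*w n (m+1) - w (n-1) m*w n m*w (n+1) m*w (n-2) (m+1) + w (n-1) m*w n m*w n m*w (n+1) m*w (n+1) m*w (n-2) (m+1)) * h2 + (-w n (m+1)*w (n+1) (m+1) + w (n-1) (m+1)*w n (m+1)*w n (m+1)*w (n+1) (m+1) + w (n-2) (m+1)*w (n-1) (m+1)*w n (m+1)*w (n+1) (m+1) - w (n-2) (m+1)*w (n-1) (m+1)*w (n-1) (m+1)*w n (m+1)*w n (m+1)*w (n+1) (m+1) + w (n+2) m*w (n+3) m*w n (m+1)*w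 (n+1) (m+1) + w (n+1) m*w (n+2) m*w n (m+1)*w (n+1) (m+1) - w (n+1) m*w (n+2) m*w (n-1) (m+1)*w n (m+1)*w n (m+1)*w (n+1) (m+1) - w (n+1) m*w (n+2) m*w (n+2) m*w (n+3) m*w n (m+1)*w (n+1) (m+1) + w n m*w (n+1) m - w n m*w (n+1) m*w (n-1) (m+1)*w n (m+1) - w n m*w (n+1) m*w (n-2) (m+1)*w (n-1) (m+1) + w n m*w (n+1) m*w (n-2) (m+1)*w (n-1) (m+1)*w (n-1) (m+1)*w n (m+1) - w n m*w (n+1) m*w (n+2) m*w (n+3) m - w n m*w (n+1) m*w (n+1) m*w (n+2) m + w n m*w (n+1) m*w (n+1) m*w (n+2) m*w (n-1) (m+1)*w n (m+1) + w n m*w (n+1) m*w (n+1) m*w (n+2) m*w (n+2) m*w (n+3) m) * h3 + (w (n+3) m*w n (m+1)*w (n+1) (m+1)*w (n+2) (m+1) - w (n+3) m*w n (m+1)*w n (m+1)*w (n+1) (m+1)*w (n+1) (m+1)*w (n+2) (m+1) + w (n+1) m*w n (m+1) - w (n+1) m*w n (m+1)*w n (m+1)*w (n+1) (m+1) - w (n+1)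 m*w (n-1) (m+1)*w n (m+1)*w n (m+1) + w (n+1) m*w (n-1) (m+1)*w n (m+1)*w n (m+1)*w n (m+1)*w (n+1) (m+1) - w (n+1) m*w (n+2) m*w (n+3) m*w n (m+1) + w (n+1) m*w (n+2) m*w (n+3) m*w n (m+1)*w n (m+1)*w (n+1) (m+1)) * h4 + (w n (m+1)*w (n+1) (m+1) - w n (m+1)*w (n+1) (m+1)*w (n+1) (m+1)*w (n+2) (m+1) - w n (m+1)*w n (m+1)*w (n+1) (m+1)*w (n+1) (m+1) + w n (m+1)*w n (m+1)*w (n+1) (m+1)*w (n+1) (m+1)*w (n+1) (m+1)*w (n+2) (m+1)) * h5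
end

section
/- Let w : ℤ² → ℝ satisfy equation (kj1): w_{n,m} w_{n+1,m} + w_{n+1,m} w_{n,m+1} + w_{n,m+1} w_{n+1,m+1} − 1 = 0 for all (n,m) ∈ ℤ², and assume w_{n,m} + w_{n,m+1} + w_{n,m+2} ≠ 0 for all (n,m) ∈ ℤ². Define the symmetry characteristic g_{n,m} := w_{n,m} (w_{n,m−1} + w_{n,m}) (w_{n,m} + w_{n,m+1}) (w_{n,m+2} + w_{n,m+1} − w_{n,m−1} − w_{n,m−2}) / [ (w_{n,m−2} + w_{n,m−1} + w_{n,m}) (w_{n,m−1} + w_{n,m} + w_{n,m+1}) (w_{n,m} + w_{n,m+1} + w_{n,m+2}) ]. Then the linearized generalized-symmetry condition holds identically on solutions: for all (n,m) ∈ ℤ², g_{n,m}·w_{n+1,m} + g_{n+1,m}·(w_{n,m} + w_{n,m+1}) + g_{n,m+1}·(w_{n+1,m} + w_{n+1,m+1}) + g_{n+1,m+1}·w_{n,m+1} = 0. (This expresses that g is a five-point generalized symmetry of (kj1) in the m-direction.) -/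
set_option maxHeartbeats 1000000

lemma mini1 (N x4 y2 X0 X1 X2 Y2 : ℝ) (h : y2*X2 = x4*Y2)
    (h0 : X0 ≠ 0) (h1 : X1 ≠ 0) (h2 : X2 ≠ 0) :
    N/(X0*X1*X2)*y2 = N*x4*Y2/(X0*X1*X2*X2) := by
  field_simp
  linear_combination N*h

lemma mini3 (N sx1 tb X1 X2 X3 Y1 : ℝ) (h : tb*X1 = sx1*Y1)
    (h1 : X1 ≠ 0) (h2 : X2 ≠ 0) (h3 : X3 ≠ 0) :
    N/(X1*X2*X3)*tb = N*sx1*Y1/(X1*X1*X2*X3) := by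
  field_simp
  linear_combination N*h

lemma mini2 (y2 ta tb tc sx0 sx1 sx2 x4 X0 X1 X2 Y0 Y1 Y2 d : ℝ)
    (h1 : y2*sx2 = x4*tc) (h2 : tc*X2 = sx2*Y2) (h3 : tb*X1 = sx1*Y1)
    (h4 : ta*X0 = sx0*Y0)
    (hX0 : X0 ≠ 0) (hX1 : X1 ≠ 0) (hX2 : X2 ≠ 0)
    (hY0 : Y0 ≠ 0) (hY1 : Y1 ≠ 0) (hY2 : Y2 ≠ 0) :
    y2*ta*tb*d/(Y0*Y1*Y2)*sx2 = x4*sx0*sx1*sx2*d/(X0*X1*X2) := by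
  rw [div_mul_eq_mul_div, div_eq_div_iff (by simp [hY0,hY1,hY2]) (by simp [hX0,hX1,hX2])]
  linear_combination (ta*tb*d*X0*X1*X2)*h1 + (x4*ta*tb*d*X0*X1)*h2
    + (x4*ta*d*sx2*Y2*X0)*h3 + (x4*d*sx1*sx2*Y1*Y2)*h4

lemma mini4 (x3 y3 p q sx1 sx2 x5 X1 X2 X3 Y1 Y2 Y3 d : ℝ)
    (h1 : p*X1 = sx1*Y1) (h2 : q*X2 = sx2*Y2) (h3 : y3*X3 = x5*Y3)
    (hX1 : X1 ≠ 0) (hX2 : X2 ≠ 0) (hX3 : X3 ≠ 0)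
    (hY1 : Y1 ≠ 0) (hY2 : Y2 ≠ 0) (hY3 : Y3 ≠ 0) :
    y3*p*q*d/(Y1*Y2*Y3)*x3 = x3*x5*sx1*sx2*d/(X1*X2*X3) := by
  rw [div_mul_eq_mul_div, div_eq_div_iff (by simp [hY1,hY2,hY3]) (by simp [hX1,hX2,hX3])]
  linear_combination (y3*q*d*x3*X2*X3)*h1 + (y3*d*x3*sx1*Y1*X3)*h2
    + (d*x3*sx1*Y1*sx2*Y2)*h3

lemma finlem (x2 x3 x4 x5 sx0 sx1 sx2 sx3 sx4 X0 X1 X2 X3 Y0 Y1 Y2 Y3 : ℝ)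
    (hX0 : X0 ≠ 0) (hX1 : X1 ≠ 0) (hX2 : X2 ≠ 0) (hX3 : X3 ≠ 0)
    (hW : x2*x4*(sx3-sx0)*X1*X3*Y2 + x4*sx0*(Y2-Y0)*X1*X2*X3
        + x3*sx3*(sx4-sx1)*X0*X2*Y1 + x3*x5*(Y3-Y1)*X0*X1*X2 = 0) :
    x2*sx1*sx2*(sx3-sx0)*x4*Y2/(X0*X1*X2*X2) + x4*sx0*sx1*sx2*(Y2-Y0)/(X0*X1*X2)
      + x3*sx2*sx3*(sx4-sx1)*sx1*Y1/(X1*X1*X2*X3) + x3*x5*sx1*sx2*(Y3-Y1)/(X1*X2*X3) = 0 := by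
  field_simp
  linear_combination (sx1*sx2)*hW

lemma master (x0 x1 x2 x3 x4 x5 y0 y1 y2 y3 y4 y5 : ℝ)
    (e0 : x0*y0 + y0*x1 + x1*y1 - 1 = 0)
    (e1 : x1*y1 + y1*x2 + x2*y2 - 1 = 0)
    (e2 : x2*y2 + y2*x3 + x3*y3 - 1 = 0)
    (e3 : x3*y3 + y3*x4 + x4*y4 - 1 = 0)
    (e4 : x4*y4 + y4*x5 + x5*y5 - 1 = 0)
    (hX0 : x0+x1+x2 ≠ 0) (hX1 : x1+x2+x3 ≠ 0) (hX2 : x2+x3+x4 ≠ 0) (hX3 : x3+x4+x5 ≠ 0)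
    (hY0 : y0+y1+y2 ≠ 0) (hY1 : y1+y2+y3 ≠ 0) (hY2 : y2+y3+y4 ≠ 0) (hY3 : y3+y4+y5 ≠ 0) :
    x2*(x1+x2)*(x2+x3)*(x4+x3-x1-x0)/((x0+x1+x2)*(x1+x2+x3)*(x2+x3+x4))*y2
      + y2*(y1+y2)*(y2+y3)*(y4+y3-y1-y0)/((y0+y1+y2)*(y1+y2+y3)*(y2+y3+y4))*(x2+x3)
      + x3*(x2+x3)*(x3+x4)*(x5+x4-x2-x1)/((x1+x2+x3)*(x2+x3+x4)*(x3+x4+x5))*(y2+y3)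
      + y3*(y2+y3)*(y3+y4)*(y5+y4-y2-y1)/((y1+y2+y3)*(y2+y3+y4)*(y3+y4+y5))*x3 = 0 := by
  have r0 : y0*(x0+x1) - x2*(y1+y2) = 0 := by linear_combination e0 - e1
  have r1 : y1*(x1+x2) - x3*(y2+y3) = 0 := by linear_combination e1 - e2
  have r2 : y2*(x2+x3) - x4*(y3+y4) = 0 := by linear_combination e2 - e3
  have r3 : y3*(x3+x4) - x5*(y4+y5) = 0 := by linear_combination e3 - e4
  have rr0 : (y1+y2)*(x0+x1+x2) = (x0+x1)*(y0+y1+y2) := by linear_combination -r0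
  have rr1 : (y2+y3)*(x1+x2+x3) = (x1+x2)*(y1+y2+y3) := by linear_combination -r1
  have rr2 : (y3+y4)*(x2+x3+x4) = (x2+x3)*(y2+y3+y4) := by linear_combination -r2
  have f2 : y2*(x2+x3+x4) = x4*(y2+y3+y4) := by linear_combination r2
  have f3 : y3*(x3+x4+x5) = x5*(y3+y4+y5) := by linear_combination r3
  have h1i : y2*(x2+x3) = x4*(y3+y4) := by linear_combination r2
  have c1 : x3*(y1+y2+y3)*(x0+x1+x2)*(x2+x3+x4) + x4*(y2+y3+y4)*(x0+x1+x2)*(x1+x2+x3)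
      - (x0+x1)*(y0+y1+y2)*(x1+x2+x3)*(x2+x3+x4) = 0 := by
    linear_combination (-(x1*x2 + x2^2 + x1*x3 + 2*x2*x3 + x3^2 + x1*x4 + x2*x4 + x3*x4))*r0
      + (-(x0*x2 + x1*x2 + x2^2 + x0*x3 + x1*x3 + x2*x3 + x0*x4 + x1*x4 + x2*x4))*r1
      + (-(x0*x1 + x1^2 + x0*x2 + 2*x1*x2 + x2^2 + x0*x3 + x1*x3 + x2*x3))*r2
  have c2 : x4*(y2+y3+y4)*(x1+x2+x3)*(x3+x4+x5) + x5*(y3+y4+y5)*(x1+x2+x3)*(x2+x3+x4)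
      - (x1+x2)*(y1+y2+y3)*(x2+x3+x4)*(x3+x4+x5) = 0 := by
    linear_combination (-(x2*x3 + x3^2 + x2*x4 + 2*x3*x4 + x4^2 + x2*x5 + x3*x5 + x4*x5))*r1
      + (-(x1*x3 + x2*x3 + x3^2 + x1*x4 + x2*x4 + x3*x4 + x1*x5 + x2*x5 + x3*x5))*r2
      + (-(x1*x2 + x2^2 + x1*x3 + 2*x2*x3 + x3^2 + x1*x4 + x2*x4 + x3*x4))*r3
  have hW : x2*x4*((x3+x4)-(x0+x1))*(x1+x2+x3)*(x3+x4+x5)*(y2+y3+y4)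
      + x4*(x0+x1)*((y2+y3+y4)-(y0+y1+y2))*(x1+x2+x3)*(x2+x3+x4)*(x3+x4+x5)
      + x3*(x3+x4)*((x4+x5)-(x1+x2))*(x0+x1+x2)*(x2+x3+x4)*(y1+y2+y3)
      + x3*x5*((y3+y4+y5)-(y1+y2+y3))*(x0+x1+x2)*(x1+x2+x3)*(x2+x3+x4) = 0 := by
    linear_combination (x4*(x3+x4+x5))*c1 + (x3*(x0+x1+x2))*c2
  have hT1 := mini1 (x2*(x1+x2)*(x2+x3)*(x4+x3-x1-x0)) x4 y2 (x0+x1+x2) (x1+x2+x3)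
    (x2+x3+x4) (y2+y3+y4) f2 hX0 hX1 hX2
  have hT2 := mini2 y2 (y1+y2) (y2+y3) (y3+y4) (x0+x1) (x1+x2) (x2+x3) x4 (x0+x1+x2)
    (x1+x2+x3) (x2+x3+x4) (y0+y1+y2) (y1+y2+y3) (y2+y3+y4) (y4+y3-y1-y0)
    h1i rr2 rr1 rr0 hX0 hX1 hX2 hY0 hY1 hY2
  have hT3 := mini3 (x3*(x2+x3)*(x3+x4)*(x5+x4-x2-x1)) (x1+x2) (y2+y3) (x1+x2+x3)
    (x2+x3+x4) (x3+x4+x5) (y1+y2+y3) rr1 hX1 hX2 hX3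
  have hT4 := mini4 x3 y3 (y2+y3) (y3+y4) (x1+x2) (x2+x3) x5 (x1+x2+x3) (x2+x3+x4)
    (x3+x4+x5) (y1+y2+y3) (y2+y3+y4) (y3+y4+y5) (y5+y4-y2-y1)
    rr1 rr2 f3 hX1 hX2 hX3 hY1 hY2 hY3
  rw [hT1, hT2, hT3, hT4]
  have fin := finlem x2 x3 x4 x5 (x0+x1) (x1+x2) (x2+x3) (x3+x4) (x4+x5) (x0+x1+x2)
    (x1+x2+x3) (x2+x3+x4) (x3+x4+x5) (y0+y1+y2) (y1+y2+y3) (y2+y3+y4) (y3+y4+y5)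
    hX0 hX1 hX2 hX3 hW
  linear_combination fin

/-- The five-point symmetry characteristic (Carandini3) in the m-direction
is a generalized symmetry of (kj1): the linearized symmetry condition holds
identically on solutions. -/
theorem kj1_symmetry_m_direction (w : ℤ → ℤ → ℝ) (hw : Kj1 w)
    (hne : ∀ n m : ℤ, w n m + w n (m+1) + w n (m+2) ≠ 0)
    (g : ℤ → ℤ → ℝ)
    (hg : ∀ n m : ℤ, g n m =
      w n m * (w n (m-1) + w n m) * (w n m + w n (m+1))
        * (w n (m+2) + w n (m+1) - w n (m-1) - w n (m-2))
        / ((w n (m-2) + w n (m-1) + w n m) * (w n (m-1) + w n m + w n (m+1))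
            * (w n m + w n (m+1) + w n (m+2)))) :
    ∀ n m : ℤ,
      g n m * w (n+1) m + g (n+1) m * (w n m + w n (m+1))
        + g n (m+1) * (w (n+1) m + w (n+1) (m+1))
        + g (n+1) (m+1) * w n (m+1) = 0 := by
  intro n m
  have E0 := hw n (m-2)
  have E1 := hw n (m-1)
  have E2 := hw n m
  have E3 := hw n (m+1)
  have E4 := hw n (m+2)
  rw [show m-2+1 = m-1 by ring] at E0
  rw [show m-1+1 = m by ring] at E1
  rw [show m+1+1 = m+2 by ring] at E3
  rw [show m+2+1 = m+3 by ring] at E4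
  have hX0 := hne n (m-2)
  have hX1 := hne n (m-1)
  have hX2 := hne n m
  have hX3 := hne n (m+1)
  have hY0 := hne (n+1) (m-2)
  have hY1 := hne (n+1) (m-1)
  have hY2 := hne (n+1) m
  have hY3 := hne (n+1) (m+1)
  rw [show m-2+1 = m-1 by ring, show m-2+2 = m by ring] at hX0 hY0
  rw [show m-1+1 = m by ring, show m-1+2 = m+1 by ring] at hX1 hY1
  rw [show m+1+1 = m+2 by ring, show m+1+2 = m+3 by ring] at hX3 hY3
  have hg1 := hg n m
  have hg2 := hg (n+1) m
  have hg3 := hg n (m+1)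
  have hg4 := hg (n+1) (m+1)
  rw [show m+1-1 = m by ring, show m+1+1 = m+2 by ring, show m+1-2 = m-1 by ring,
    show m+1+2 = m+3 by ring] at hg3 hg4
  rw [hg1, hg2, hg3, hg4]
  exact master (w n (m-2)) (w n (m-1)) (w n m) (w n (m+1)) (w n (m+2)) (w n (m+3))
    (w (n+1) (m-2)) (w (n+1) (m-1)) (w (n+1) m) (w (n+1) (m+1)) (w (n+1) (m+2)) (w (n+1) (m+3))
    E0 E1 E2 E3 E4 hX0 hX1 hX2 hX3 hY0 hY1 hY2 hY3
end

section
/- Let w : ℝ × ℤ → ℝ, written w_n(ε), be differentiable in ε and satisfy the differential–difference equation (Carandini2): d/dε w_n = w_n (w_{n−1} w_n − 1)(w_n w_{n+1} − 1)(w_{n+2} w_{n+1} − w_{n−1} w_{n−2}) for all n ∈ ℤ and all ε ∈ ℝ. Define t_n(ε) := w_n(ε) w_{n+1}(ε) − 1. Then t satisfies the Bogoyavlensky-type lattice (Carandini7): d/dε t_n = t_n (t_n + 1)(t_{n+2} t_{n+1} − t_{n−1} t_{n−2}) for all n ∈ ℤ and all ε ∈ ℝ. -/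
/-- Potentiation `t_n = w_n w_{n+1} - 1` maps the symmetry flow (Carandini2)
to the Bogoyavlensky-type lattice (Carandini7). -/
theorem carandini2_to_carandini7 (w : ℝ → ℤ → ℝ)
    (hdiff : ∀ n : ℤ, Differentiable ℝ (fun ε => w ε n))
    (heq : ∀ (ε : ℝ) (n : ℤ),
      deriv (fun ε => w ε n) ε =
        w ε n * (w ε (n-1) * w ε n - 1) * (w ε n * w ε (n+1) - 1)
          * (w ε (n+2) * w ε (n+1) - w ε (n-1) * w ε (n-2)))
    (t : ℝ → ℤ → ℝ)
    (ht : ∀ (ε : ℝ) (n : ℤ), t ε n = w ε n * w ε (n+1) - 1) :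
    ∀ (ε : ℝ) (n : ℤ),
      deriv (fun ε => t ε n) ε =
        t ε n * (t ε n + 1) * (t ε (n+2) * t ε (n+1) - t ε (n-1) * t ε (n-2)) := by
  intro ε n
  have hfun : (fun ε => t ε n) = fun ε => w ε n * w ε (n+1) - 1 :=
    funext fun ε => ht ε n
  rw [hfun]
  rw [deriv_fun_sub (f := fun ε => w ε n * w ε (n+1)) (((hdiff n).mul (hdiff (n+1))) ε) (differentiable_const 1 ε),
    deriv_fun_mul ((hdiff n) ε) ((hdiff (n+1)) ε), deriv_const]
  have e1 := heq ε n
  have e2 := heq ε (n+1)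
  have i1 : n + 1 - 1 = n := by ring
  have i2 : n + 1 + 1 = n + 2 := by ring
  have i3 : n + 1 + 2 = n + 3 := by ring
  have i4 : n + 1 - 2 = n - 1 := by ring
  rw [i1, i2, i3, i4] at e2
  rw [e1, e2, ht ε n, ht ε (n+2), ht ε (n+1), ht ε (n-1), ht ε (n-2)]
  have j1 : n + 2 + 1 = n + 3 := by ring
  have j2 : n + 1 + 1 = n + 2 := by ring
  have j3 : n - 1 + 1 = n := by ring
  have j4 : n - 2 + 1 = n - 1 := by ring
  rw [j1, j2, j3, j4]
  ring
end

section
/- Let w : ℝ × ℤ → ℝ, written w_m(ε̃), be differentiable in ε̃, satisfy w_m + w_{m+1} + w_{m+2} ≠ 0 for all m ∈ ℤ and all ε̃ ∈ ℝ, and satisfy the differential–difference equation (Carandini3): d/dε̃ w_m = w_m (w_{m−1} + w_m)(w_m + w_{m+1})(w_{m+2} + w_{m+1} − w_{m−1} − w_{m−2}) / [ (w_{m−2} + w_{m−1} + w_m)(w_{m−1} + w_m + w_{m+1})(w_m + w_{m+1} + w_{m+2}) ] for all m ∈ ℤ and all ε̃ ∈ ℝ. Define t̃_m(ε̃) :=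 −(w_{m+2} + w_{m+1}) / (w_m + w_{m+2} + w_{m+1}). Then t̃ satisfies the Bogoyavlensky lattice (C4): d/dε̃ t̃_m = t̃_m (t̃_m + 1)(t̃_{m+2} t̃_{m+1} − t̃_{m−1} t̃_{m−2}) for all m ∈ ℤ and all ε̃ ∈ ℝ. -/
set_option maxHeartbeats 1000000

/-- The transformation (C3a), `t̃_m = -(w_{m+2}+w_{m+1})/(w_m+w_{m+2}+w_{m+1})`,
maps the symmetry flow (Carandini3) to the Bogoyavlensky lattice (C4). -/
theorem carandini3_to_bogoyavlensky (w : ℝ → ℤ → ℝ)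
    (hdiff : ∀ m : ℤ, Differentiable ℝ (fun ε => w ε m))
    (hne : ∀ (ε : ℝ) (m : ℤ), w ε m + w ε (m+1) + w ε (m+2) ≠ 0)
    (heq : ∀ (ε : ℝ) (m : ℤ),
      deriv (fun ε => w ε m) ε =
        w ε m * (w ε (m-1) + w ε m) * (w ε m + w ε (m+1))
          * (w ε (m+2) + w ε (m+1) - w ε (m-1) - w ε (m-2))
          / ((w ε (m-2) + w ε (m-1) + w ε m) * (w ε (m-1) + w ε m + w ε (m+1))
              * (w ε m + w ε (m+1) + w ε (m+2))))
    (t : ℝ → ℤ → ℝ)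
    (ht : ∀ (ε : ℝ) (m : ℤ),
      t ε m = -(w ε (m+2) + w ε (m+1)) / (w ε m + w ε (m+2) + w ε (m+1))) :
    ∀ (ε : ℝ) (m : ℤ),
      deriv (fun ε => t ε m) ε =
        t ε m * (t ε m + 1) * (t ε (m+2) * t ε (m+1) - t ε (m-1) * t ε (m-2)) := by
  intro ε m
  have key : ∀ k : ℤ, HasDerivAt (fun ε => w ε k)
      (w ε k * (w ε (k-1) + w ε k) * (w ε k + w ε (k+1))
          * (w ε (k+2) + w ε (k+1) - w ε (k-1) - w ε (k-2))
          / ((w ε (k-2) + w ε (k-1) + w ε k) * (w ε (k-1) + w ε k + w ε (k+1))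
              * (w ε k + w ε (k+1) + w ε (k+2)))) ε := by
    intro k
    have h := (hdiff k ε).hasDerivAt
    rwa [heq ε k] at h
  have hS : ∀ k : ℤ, w ε k + w ε (k+1) + w ε (k+2) ≠ 0 := hne ε
  have hfun : (fun ε => t ε m)
      = fun ε => -(w ε (m+2) + w ε (m+1)) / (w ε m + w ε (m+2) + w ε (m+1)) :=
    funext fun ε => ht ε m
  have hDm : w ε m + w ε (m+2) + w ε (m+1) ≠ 0 := by
    have := hS m; intro h; exact this (by linarith)
  have hN := ((key (m+2)).add (key (m+1))).neg
  have hD := ((key m).add (key (m+2))).add (key (m+1))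
  have hdiv := hN.div hD hDm
  rw [hfun, show deriv (fun ε => -(w ε (m+2) + w ε (m+1)) / (w ε m + w ε (m+2) + w ε (m+1))) ε = _ from hdiv.deriv, ht ε m, ht ε (m+1), ht ε (m+2), ht ε (m-1), ht ε (m-2)]
  simp only [Pi.add_apply, Pi.neg_apply]
  have ha := hS (m-2); have hb := hS (m-1); have hc := hS m
  have hd := hS (m+1); have he := hS (m+2)
  clear hN hD hdiv key hfun hDm heq hdiff hne hS ht
  simp only [show m+1+2 = m+3 from by ring, show m+1+1 = m+2 from by ring,
    show m+2+2 = m+4 from by ring, show m+2+1 = m+3 from by ring,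
    show m-1+2 = m+1 from by ring, show m-1+1 = m from by ring,
    show m-2+2 = m from by ring, show m-2+1 = m-1 from by ring,
    show m+1-1 = m from by ring, show m+1-2 = m-1 from by ring,
    show m+2-1 = m+1 from by ring, show m+2-2 = m from by ring] at ha hb hc hd he ⊢
  generalize hA : w ε (m-2) = A
  generalize hB : w ε (m-1) = B
  generalize hC : w ε m = C
  generalize hD : w ε (m+1) = D
  generalize hE : w ε (m+2) = E
  generalize hF : w ε (m+3) = F
  generalize hG : w ε (m+4) = G
  rw [hA, hB, hC] at ha
  rw [hB, hC, hD] at hb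
  rw [hC, hD, hE] at hc
  rw [hD, hE, hF] at hd
  rw [hE, hF, hG] at he
  rw [show C+E+D = C+D+E from by ring, show A+C+B = A+B+C from by ring,
    show B+D+C = B+C+D from by ring, show D+F+E = D+E+F from by ring,
    show E+G+F = E+F+G from by ring]
  generalize h1 : A + B + C = S1
  generalize h2 : B + C + D = S2
  generalize h3 : C + D + E = S3
  generalize h4 : D + E + F = S4
  generalize h5 : E + F + G = S5
  have n1 : S1 ≠ 0 := by rw [← h1]; exact ha
  have n2 : S2 ≠ 0 := by rw [← h2]; exact hb
  have n3 : S3 ≠ 0 := by rw [← h3]; exact hc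
  have n4 : S4 ≠ 0 := by rw [← h4]; exact hd
  have n5 : S5 ≠ 0 := by rw [← h5]; exact he
  have n3' : C + D + E ≠ 0 := by rw [h3]; exact n3
  have p3 : S1 * S2 * S3 ≠ 0 := mul_ne_zero (mul_ne_zero n1 n2) n3
  have p234 : S2 * S3 * S4 ≠ 0 := mul_ne_zero (mul_ne_zero n2 n3) n4
  have p345 : S3 * S4 * S5 ≠ 0 := mul_ne_zero (mul_ne_zero n3 n4) n5
  have p5 : S1 * S2 * S3 * S4 * S5 ≠ 0 :=
    mul_ne_zero (mul_ne_zero (mul_ne_zero (mul_ne_zero n1 n2) n3) n4) n5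
  have e1 : C * (B + C) * (C + D) * (E + D - B - A) / (S1 * S2 * S3)
      = C * (B + C) * (C + D) * (E + D - B - A) * (S4 * S5) / (S1 * S2 * S3 * S4 * S5) := by
    rw [div_eq_div_iff p3 p5]; ring
  have e2 : D * (C + D) * (D + E) * (F + E - C - B) / (S2 * S3 * S4)
      = D * (C + D) * (D + E) * (F + E - C - B) * (S1 * S5) / (S1 * S2 * S3 * S4 * S5) := by
    rw [div_eq_div_iff p234 p5]; ring
  have e3 : E * (D + E) * (E + F) * (G + F - D - C) / (S3 * S4 * S5)
      = E * (D + E) * (E + F) * (G + F - D - C) * (S1 * S2) / (S1 * S2 * S3 * S4 * S5) := by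
    rw [div_eq_div_iff p345 p5]; ring
  rw [e1, e2, e3]
  have hnum : -(E * (D + E) * (E + F) * (G + F - D - C) * (S1 * S2) / (S1 * S2 * S3 * S4 * S5)
        + D * (C + D) * (D + E) * (F + E - C - B) * (S1 * S5) / (S1 * S2 * S3 * S4 * S5)) * S3
      - -(E + D) * (C * (B + C) * (C + D) * (E + D - B - A) * (S4 * S5) / (S1 * S2 * S3 * S4 * S5)
        + E * (D + E) * (E + F) * (G + F - D - C) * (S1 * S2) / (S1 * S2 * S3 * S4 * S5)
        + D * (C + D) * (D + E) * (F + E - C - B) * (S1 * S5) / (S1 * S2 * S3 * S4 * S5))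
      = ((E + D) * (C * (B + C) * (C + D) * (E + D - B - A) * (S4 * S5))
          - C * (D * (C + D) * (D + E) * (F + E - C - B) * (S1 * S5))
          - C * (E * (D + E) * (E + F) * (G + F - D - C) * (S1 * S2)))
        / (S1 * S2 * S3 * S4 * S5) := by
    rw [← h3] at p5 ⊢
    field_simp
    ring
  rw [hnum]
  have hcore : (E + D) * (C * (B + C) * (C + D) * (E + D - B - A) * (S4 * S5))
        - C * (D * (C + D) * (D + E) * (F + E - C - B) * (S1 * S5))
        - C * (E * (D + E) * (E + F) * (G + F - D - C) * (S1 * S2))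
      = S3 * (-((E + D) * C) * ((G + F) * (F + E) * (S1 * S2)
          - (D + C) * (C + B) * (S4 * S5))) := by
    rw [← h1, ← h2, ← h3, ← h4, ← h5]; ring
  rw [hcore]
  have ht1 : -(E + D) / S3 + 1 = C / S3 := by
    rw [← h3]
    field_simp
    ring
  rw [ht1]
  field_simp
end

section
/- Let w : ℤ² → ℝ satisfy equation (kj1): w_{n,m} w_{n+1,m} + w_{n+1,m} w_{n,m+1} + w_{n,m+1} w_{n+1,m+1} − 1 = 0 for all (n,m) ∈ ℤ², with w_{n,m} ≠ 0 for all (n,m). Define t_{n,m} := w_{n,m} w_{n+1,m} − 1. Then t satisfies equation (Carandini6): (t_{n+1,m+1} + t_{n+1,m} + 1)(t_{n,m+1} + t_{n,m} + 1) − (t_{n+1,m} + 1)(t_{n,m+1} + 1) = 0 for all (n,m) ∈ ℤ². -/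
/-- Equation (Carandini6) for a field `t : ℤ² → ℝ`. -/
def Carandini6 (t : ℤ → ℤ → ℝ) : Prop :=
  ∀ n m : ℤ,
    (t (n+1) (m+1) + t (n+1) m + 1) * (t n (m+1) + t n m + 1)
      - (t (n+1) m + 1) * (t n (m+1) + 1) = 0

/-- The potentiation `t_{n,m} = w_{n,m} w_{n+1,m} - 1` maps solutions
of (kj1) to solutions of (Carandini6). -/
theorem kj1_to_carandini6 (w : ℤ → ℤ → ℝ) (hw : Kj1 w)
    (hw0 : ∀ n m : ℤ, w n m ≠ 0)
    (t : ℤ → ℤ → ℝ)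
    (ht : ∀ n m : ℤ, t n m = w n m * w (n+1) m - 1) :
    Carandini6 t := by
  intro n m
  have h1 := hw n m
  have h2 := hw (n+1) m
  rw [ht, ht, ht, ht]
  linear_combination (w (n+1) (m+1) * w (n+1+1) (m+1) + w (n+1) m * w (n+1+1) m - 1) * h1
    + (-(w (n+1) m * w n (m+1))) * h2
end

section
/- Let w : ℤ² → ℝ satisfy equation (kj1): w_{n,m} w_{n+1,m} + w_{n+1,m} w_{n,m+1} + w_{n,m+1} w_{n+1,m+1} − 1 = 0 for all (n,m) ∈ ℤ², with w_{n,m} ≠ 0 and w_{n,m} + w_{n,m+1} + w_{n,m+2} ≠ 0 for all (n,m). Define t̃_{n,m} := −(w_{n,m+2} + w_{n,m+1})/(w_{n,m} + w_{n,m+2} + w_{n,m+1}). Then t̃_{n,m} + 1 ≠ 0 for all (n,m), and the following Miura-transformation identities hold for all (n,m) ∈ ℤ²: (Amor1) w_{n,m+1} = −((t̃_{n+1,m} + t̃_{n,m} + 1)/(t̃_{n,m} + 1))·w_{n,m}; (Amor2) w_{n,m+2} = ((t̃_{n+1,m} + 1)/(t̃_{n,m} + 1))·w_{n,m}; and (Amor3)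 the quantity D_{n,m} := t̃_{n+2,m} t̃_{n+1,m} + (t̃_{n,m} + 1)(t̃_{n+2,m} + t̃_{n+1,m} + 1) is nonzero and w_{n+1,m} = (t̃_{n,m} + 1)(t̃_{n+1,m} + 1) / (D_{n,m}·w_{n,m}). -/
/-- Theorem 3 (first part): the Miura-transformation identities
(Amor1), (Amor2), (Amor3) for the transformation (C3a) of (kj1). -/
theorem kj1_amor_identities (w : ℤ → ℤ → ℝ) (hw : Kj1 w)
    (hw0 : ∀ n m : ℤ, w n m ≠ 0)
    (hne : ∀ n m : ℤ, w n m + w n (m+1) + w n (m+2) ≠ 0)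
    (t : ℤ → ℤ → ℝ)
    (ht : ∀ n m : ℤ,
      t n m = -(w n (m+2) + w n (m+1)) / (w n m + w n (m+2) + w n (m+1))) :
    (∀ n m : ℤ, t n m + 1 ≠ 0) ∧
    (∀ n m : ℤ, w n (m+1) = -((t (n+1) m + t n m + 1) / (t n m + 1)) * w n m) ∧
    (∀ n m : ℤ, w n (m+2) = ((t (n+1) m + 1) / (t n m + 1)) * w n m) ∧
    (∀ n m : ℤ,
      t (n+2) m * t (n+1) m + (t n m + 1) * (t (n+2) m + t (n+1) m + 1) ≠ 0 ∧
      w (n+1) m = (t n m + 1) * (t (n+1) m + 1)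
        / ((t (n+2) m * t (n+1) m + (t n m + 1) * (t (n+2) m + t (n+1) m + 1))
            * w n m)) := by
  -- reordered nonvanishing hypothesis
  have hS : ∀ n m : ℤ, w n m + w n (m+2) + w n (m+1) ≠ 0 := by
    intro n m h; exact hne n m (by linarith)
  -- `t + 1 = w / S`
  have htp : ∀ n m : ℤ,
      t n m + 1 = w n m / (w n m + w n (m+2) + w n (m+1)) := by
    intro n m
    rw [ht n m, div_add' _ _ _ (hS n m)]
    congr 1; ring
  have ht1 : ∀ n m : ℤ, t n m + 1 ≠ 0 := by
    intro n m
    rw [htp n m]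
    exact div_ne_zero (hw0 n m) (hS n m)
  -- kj1 shifted one step in the second index
  have E2 : ∀ n m : ℤ, w n (m+1) * w (n+1) (m+1) + w (n+1) (m+1) * w n (m+2)
      + w n (m+2) * w (n+1) (m+2) - 1 = 0 := by
    intro n m
    have h := hw n (m+1)
    rw [show m+1+1 = m+2 by ring] at h
    exact h
  -- key consequence of kj1
  have key : ∀ n m : ℤ,
      w n (m+2) * (w (n+1) (m+1) + w (n+1) (m+2))
        = w (n+1) m * (w n m + w n (m+1)) := by
    intro n m
    linear_combination E2 n m - hw n m
  refine ⟨ht1, ?_, ?_, ?_⟩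
  · -- (Amor1)
    intro n m
    rw [show t (n+1) m + t n m + 1 = t (n+1) m + (t n m + 1) by ring,
        htp n m, ht (n+1) m]
    field_simp [hS n m, hS (n+1) m, hw0 n m]
    linear_combination (-1 : ℝ) * key n m
  · -- (Amor2)
    intro n m
    rw [htp n m, htp (n+1) m]
    field_simp [hS n m, hS (n+1) m, hw0 n m]
    linear_combination key n m
  · -- (Amor3)
    intro n m
    have E1a := hw n m
    have E2a := E2 n m
    have E1b := hw (n+1) m
    have E2b := E2 (n+1) m
    rw [show (n:ℤ)+1+1 = n+2 by ring] at E1b E2b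
    have key3 : (t (n+2) m * t (n+1) m
        + (t n m + 1) * (t (n+2) m + t (n+1) m + 1))
        * ((w n m + w n (m+2) + w n (m+1))
          * (w (n+1) m + w (n+1) (m+2) + w (n+1) (m+1))) = 1 := by
      rw [ht (n+2) m, ht (n+1) m, ht n m]
      field_simp [hS n m, hS (n+1) m, hS (n+2) m]
      linear_combination (w (n+2) m * E1a + (w (n+2) (m+1) + w (n+2) (m+2)) * E2a
          - w n (m+1) * E1b + w n (m+1) * E2b)
    refine ⟨left_ne_zero_of_mul_eq_one key3, ?_⟩
    have hDeq : t (n+2) m * t (n+1) m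
        + (t n m + 1) * (t (n+2) m + t (n+1) m + 1)
        = ((w n m + w n (m+2) + w n (m+1))
          * (w (n+1) m + w (n+1) (m+2) + w (n+1) (m+1)))⁻¹ :=
      eq_inv_of_mul_eq_one_left key3
    rw [hDeq, htp n m, htp (n+1) m]
    field_simp [hS n m, hS (n+1) m, hw0 n m]
end

section
/- Let w : ℤ² → ℝ satisfy equation (kj1): w_{n,m} w_{n+1,m} + w_{n+1,m} w_{n,m+1} + w_{n,m+1} w_{n+1,m+1} − 1 = 0 for all (n,m) ∈ ℤ², with w_{n,m} ≠ 0 and w_{n,m} + w_{n,m+1} + w_{n,m+2} ≠ 0 for all (n,m). Define t̃_{n,m} := −(w_{n,m+2} + w_{n,m+1})/(w_{n,m} + w_{n,m+2} + w_{n,m+1}). Then t̃ satisfies equation (Romulus4): (t̃_{n+1,m+1} + t̃_{n,m+1} + 1)(t̃_{n+1,m} + t̃_{n,m} + 1) − (t̃_{n+1,m} + 1)(t̃_{n,m+1} + 1) = 0 for all (n,m) ∈ ℤ². -/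
/-- Equation (Romulus4) for a field `t : ℤ² → ℝ`. -/
def Romulus4 (t : ℤ → ℤ → ℝ) : Prop :=
  ∀ n m : ℤ,
    (t (n+1) (m+1) + t n (m+1) + 1) * (t (n+1) m + t n m + 1)
      - (t (n+1) m + 1) * (t n (m+1) + 1) = 0

/-- The transformation (C3a) maps solutions of (kj1) to solutions of
(Romulus4). -/
theorem kj1_to_romulus4 (w : ℤ → ℤ → ℝ) (hw : Kj1 w)
    (hw0 : ∀ n m : ℤ, w n m ≠ 0)
    (hne : ∀ n m : ℤ, w n m + w n (m+1) + w n (m+2) ≠ 0)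
    (t : ℤ → ℤ → ℝ)
    (ht : ∀ n m : ℤ,
      t n m = -(w n (m+2) + w n (m+1)) / (w n m + w n (m+2) + w n (m+1))) :
    Romulus4 t := by
  intro n m
  set a0 := w n m with ha0
  set a1 := w n (m+1) with ha1
  set a2 := w n (m+2) with ha2
  set a3 := w n (m+3) with ha3
  set b0 := w (n+1) m with hb0
  set b1 := w (n+1) (m+1) with hb1
  set b2 := w (n+1) (m+2) with hb2
  set b3 := w (n+1) (m+3) with hb3
  have h1 : a0*b0 + b0*a1 + a1*b1 - 1 = 0 := hw n m
  have h2 : a1*b1 + b1*a2 + a2*b2 - 1 = 0 := by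
    have := hw n (m+1)
    rwa [show m+1+1 = m+2 by ring] at this
  have h3 : a2*b2 + b2*a3 + a3*b3 - 1 = 0 := by
    have := hw n (m+2)
    rwa [show m+2+1 = m+3 by ring] at this
  have hSa : a0 + a2 + a1 ≠ 0 := by
    intro h; exact hne n m (by linarith)
  have hSa' : a1 + a3 + a2 ≠ 0 := by
    intro h
    apply hne n (m+1)
    rw [show m+1+1 = m+2 by ring, show m+1+2 = m+3 by ring]
    linarith
  have hSb : b0 + b2 + b1 ≠ 0 := by
    intro h; exact hne (n+1) m (by linarith)
  have hSb' : b1 + b3 + b2 ≠ 0 := by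
    intro h
    apply hne (n+1) (m+1)
    rw [show m+1+1 = m+2 by ring, show m+1+2 = m+3 by ring]
    linarith
  have t00 : t n m = -(a2 + a1) / (a0 + a2 + a1) := ht n m
  have t01 : t n (m+1) = -(a3 + a2) / (a1 + a3 + a2) := by
    have := ht n (m+1)
    rwa [show m+1+1 = m+2 by ring, show m+1+2 = m+3 by ring] at this
  have t10 : t (n+1) m = -(b2 + b1) / (b0 + b2 + b1) := ht (n+1) m
  have t11 : t (n+1) (m+1) = -(b3 + b2) / (b1 + b3 + b2) := by
    have := ht (n+1) (m+1)
    rwa [show m+1+1 = m+2 by ring, show m+1+2 = m+3 by ring] at this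
  have e1 : t (n+1) (m+1) + t n (m+1) + 1 = -a2 / (a1 + a3 + a2) := by
    rw [t11, t01]
    field_simp
    linear_combination h2 - h3
  have e2 : t (n+1) m + t n m + 1 = -a1 / (a0 + a2 + a1) := by
    rw [t10, t00]
    field_simp
    linear_combination h1 - h2
  have e3 : t (n+1) m + 1 = b0 / (b0 + b2 + b1) := by
    rw [t10]; field_simp; ring
  have e4 : t n (m+1) + 1 = a1 / (a1 + a3 + a2) := by
    rw [t01]; field_simp; ring
  have key : a2 * (b0 + b2 + b1) = b0 * (a0 + a2 + a1) := by linear_combination h2 - h1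
  rw [e1, e2, e3, e4, sub_eq_zero, div_mul_div_comm, div_mul_div_comm,
    div_eq_div_iff (mul_ne_zero hSa' hSa) (mul_ne_zero hSb hSa')]
  linear_combination a1 * (a1 + a3 + a2) * key
end

section
/- Let t : ℤ² → ℝ satisfy equation (Carandini6): (t_{n+1,m+1} + t_{n+1,m} + 1)(t_{n,m+1} + t_{n,m} + 1) − (t_{n+1,m} + 1)(t_{n,m+1} + 1) = 0 for all (n,m) ∈ ℤ², and let w : ℤ² → ℝ satisfy w_{n,m} ≠ 0 and w_{n,m} w_{n+1,m} = t_{n,m} + 1 for all (n,m) ∈ ℤ². Define E_{n,m} := w_{n,m} w_{n+1,m} + w_{n+1,m} w_{n,m+1} + w_{n,m+1} w_{n+1,m+1} − 1 and α_{n,m} := E_{n,m}/(w_{n+1,m} w_{n,m+1}). Then for all (n,m) ∈ ℤ²: α_{n,m} + α_{n+1,m} − α_{n,m}·α_{n+1,m} = 0. -/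
/-- If `t` satisfies (Carandini6) and `w` is defined by (Saturnus), then the
quantity `α_{n,m} = E_{n,m}/(w_{n+1,m} w_{n,m+1})` satisfies equation
(Carandini8a): `α_{n,m} + α_{n+1,m} - α_{n,m} α_{n+1,m} = 0`. -/
theorem carandini6_alpha_relation (t : ℤ → ℤ → ℝ) (hT : Carandini6 t)
    (w : ℤ → ℤ → ℝ) (hw0 : ∀ n m : ℤ, w n m ≠ 0)
    (hSat : ∀ n m : ℤ, w n m * w (n+1) m = t n m + 1)
    (E : ℤ → ℤ → ℝ)
    (hE : ∀ n m : ℤ, E n m =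
      w n m * w (n+1) m + w (n+1) m * w n (m+1)
        + w n (m+1) * w (n+1) (m+1) - 1)
    (α : ℤ → ℤ → ℝ)
    (hα : ∀ n m : ℤ, α n m = E n m / (w (n+1) m * w n (m+1))) :
    ∀ n m : ℤ, α n m + α (n+1) m - α n m * α (n+1) m = 0 := by
  intro n m
  have h1 := hSat n m
  have h2 := hSat (n+1) m
  have h3 := hSat n (m+1)
  have h4 := hSat (n+1) (m+1)
  have hC := hT n m
  have e1 := hE n m
  have e2 := hE (n+1) m
  have a1 := hα n m
  have a2 := hα (n+1) m
  have w1 := hw0 (n+1) m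
  have w2 := hw0 n (m+1)
  have w3 := hw0 (n+1+1) m
  have w4 := hw0 (n+1) (m+1)
  rw [a1, a2, e1, e2]
  field_simp
  linear_combination (-(w (n+1) m * w (n+1+1) m + w (n+1) (m+1) * w (n+1+1) (m+1) - 1)) * h1
    + (w n (m+1) * w (n+1) (m+1) - (t n m + t n (m+1) + 1)) * h2
    + ((t (n+1) m + 1) - (w (n+1) m * w (n+1+1) m + w (n+1) (m+1) * w (n+1+1) (m+1) - 1)) * h3
    + (-(t n m + t n (m+1) + 1)) * h4 - hC
end

section
/- Let t : ℤ² → ℝ satisfy equation (Carandini6): (t_{n+1,m+1} + t_{n+1,m} + 1)(t_{n,m+1} + t_{n,m} + 1) − (t_{n+1,m} + 1)(t_{n,m+1} + 1) = 0 for all (n,m) ∈ ℤ², and let w : ℤ² → ℝ satisfy w_{n,m} ≠ 0 and w_{n,m} w_{n+1,m} = t_{n,m} + 1 for all (n,m) ∈ ℤ². Assume moreover that E_{n,m} := w_{n,m} w_{n+1,m} + w_{n+1,m} w_{n,m+1} + w_{n,m+1} w_{n+1,m+1} − 1 is nonzero for all (n,m) ∈ ℤ². Then there exists a function γ : ℤ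 → ℝ (depending only on m) with γ_m ≠ 1 and γ_m ≠ −1 for all m, such that w satisfies the non-autonomous equation (Carandini8): w_{n,m} w_{n+1,m} + w_{n+1,m} w_{n,m+1}·(1 − 2/(γ_m·(−1)^n + 1)) + w_{n,m+1} w_{n+1,m+1} − 1 = 0 for all (n,m) ∈ ℤ². -/
/-- Theorem 3 of the paper: if `t` satisfies (Carandini6), `w` is defined by
(Saturnus), and (kj1) is nowhere satisfied exactly (`E ≠ 0`), then `w`
satisfies the non-autonomous equation (Carandini8) for some function `γ_m`. -/
theorem carandini6_to_carandini8 (t : ℤ → ℤ → ℝ) (hT : Carandini6 t)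
    (w : ℤ → ℤ → ℝ) (hw0 : ∀ n m : ℤ, w n m ≠ 0)
    (hSat : ∀ n m : ℤ, w n m * w (n+1) m = t n m + 1)
    (hE : ∀ n m : ℤ,
      w n m * w (n+1) m + w (n+1) m * w n (m+1)
        + w n (m+1) * w (n+1) (m+1) - 1 ≠ 0) :
    ∃ γ : ℤ → ℝ, (∀ m : ℤ, γ m ≠ 1 ∧ γ m ≠ -1) ∧
      ∀ n m : ℤ,
        w n m * w (n+1) m
          + w (n+1) m * w n (m+1) * (1 - 2 / (γ m * (-1 : ℝ) ^ n + 1))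
          + w n (m+1) * w (n+1) (m+1) - 1 = 0 := by
  set E : ℤ → ℤ → ℝ := fun n m =>
    w n m * w (n+1) m + w (n+1) m * w n (m+1)
      + w n (m+1) * w (n+1) (m+1) - 1 with hEdef
  have hEne : ∀ n m : ℤ, E n m ≠ 0 := hE
  set G : ℤ → ℤ → ℝ := fun n m => (w (n+1) m * w n (m+1)) / E n m with hGdef
  have hGne : ∀ n m : ℤ, G n m ≠ 0 := fun n m =>
    div_ne_zero (mul_ne_zero (hw0 _ _) (hw0 _ _)) (hEne n m)
  have hF : ∀ n m : ℤ, G n m + G (n+1) m = 1 := by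
    intro n m
    have h1 := hT n m
    have t1 : t n m = w n m * w (n+1) m - 1 := by linarith [hSat n m]
    have t2 : t (n+1) m = w (n+1) m * w (n+1+1) m - 1 := by linarith [hSat (n+1) m]
    have t3 : t n (m+1) = w n (m+1) * w (n+1) (m+1) - 1 := by linarith [hSat n (m+1)]
    have t4 : t (n+1) (m+1) = w (n+1) (m+1) * w (n+1+1) (m+1) - 1 := by
      linarith [hSat (n+1) (m+1)]
    rw [t1, t2, t3, t4] at h1
    have e1 := hEne n m
    have e2 := hEne (n+1) m
    simp only [hGdef, hEdef] at *
    rw [div_add_div _ _ e1 e2, div_eq_one_iff_eq (mul_ne_zero e1 e2)]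
    linear_combination -h1
  -- the key identity: 2 * G n m = γ m * (-1)^n + 1
  have hkey : ∀ m n : ℤ, 2 * G n m = (2 * G 0 m - 1) * (-1 : ℝ) ^ n + 1 := by
    intro m n
    induction n using Int.induction_on with
    | zero => simp
    | succ k ih =>
      have h := hF k m
      have hpow : ((-1 : ℝ) ^ ((k : ℤ) + 1)) = -((-1 : ℝ) ^ (k : ℤ)) := by
        rw [zpow_add_one₀ (by norm_num : (-1 : ℝ) ≠ 0)]; ring
      rw [hpow]
      linarith [ih]
    | pred k ih =>
      have h := hF (-(k : ℤ) - 1) m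
      have hidx : (-(k : ℤ) - 1 + 1) = -(k : ℤ) := by ring
      rw [hidx] at h
      have hpow : ((-1 : ℝ) ^ (-(k : ℤ) - 1)) = -((-1 : ℝ) ^ (-(k : ℤ))) := by
        rw [show (-(k : ℤ) - 1) = (-(k : ℤ)) + -1 by ring,
          zpow_add₀ (by norm_num : (-1 : ℝ) ≠ 0)]
        norm_num
      rw [hpow]
      linarith [ih]
  refine ⟨fun m => 2 * G 0 m - 1, fun m => ?_, fun n m => ?_⟩
  · constructor
    · intro h
      have h' : 2 * G 0 m - 1 = 1 := h
      have h1 := hkey m 1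
      rw [h'] at h1
      norm_num at h1
      exact hGne 1 m h1
    · intro h
      have h' : 2 * G 0 m - 1 = -1 := h
      have h0 := hkey m 0
      rw [h'] at h0
      norm_num at h0
      exact hGne 0 m h0
  · have hk := hkey m n
    have hne : ((2 * G 0 m - 1) * (-1 : ℝ) ^ n + 1) ≠ 0 := by
      rw [← hk]
      exact mul_ne_zero two_ne_zero (hGne n m)
    rw [← hk]
    have e1 := hEne n m
    have hw1 := hw0 (n+1) m
    have hw2 := hw0 n (m+1)
    simp only [hGdef, hEdef] at *
    field_simp
    ring
end

section
/- Let t : ℤ² → ℝ satisfy equation (Carandini6): (t_{n+1,m+1} + t_{n+1,m} + 1)(t_{n,m+1} + t_{n,m} + 1) − (t_{n+1,m} + 1)(t_{n,m+1} + 1) = 0 for all (n,m) ∈ ℤ², with t_{n,m} + 1 ≠ 0 for all (n,m). Let w : ℤ² → ℝ satisfy w_{n,m} ≠ 0 for all (n,m) and the m-direction recursion (Carandini5): w_{n,m+1} = −((t_{n,m+1} + t_{n,m} + 1)/(t_{n,m} + 1))·w_{n,m} for all (n,m) ∈ ℤ². Assume moreover that S_{n,m} := w_{n,m} w_{n+1,m}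 + w_{n+1,m} w_{n,m+1} + w_{n,m+1} w_{n+1,m+1} is nonzero for all (n,m) ∈ ℤ². Then S_{n,m+1} = S_{n,m} for all (n,m) ∈ ℤ²; consequently there exists a function β : ℤ → ℝ (depending only on n) with β_n ≠ −1 for all n, such that w satisfies the non-autonomous equation (Carandini9): w_{n,m} w_{n+1,m} + w_{n+1,m} w_{n,m+1} + w_{n,m+1} w_{n+1,m+1} − (1 + β_n) = 0 for all (n,m) ∈ ℤ². -/
/-- Theorem 4 of the paper: if `t` satisfies (Carandini6) and `w` is defined
by the recursion (Carandini5), then `S_{n,m}` is independent of `m` and `w`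
satisfies the non-autonomous equation (Carandini9) for some function
`β_n ≠ -1`. -/
theorem carandini6_to_carandini9 (t : ℤ → ℤ → ℝ) (hT : Carandini6 t)
    (ht1 : ∀ n m : ℤ, t n m + 1 ≠ 0)
    (w : ℤ → ℤ → ℝ) (hw0 : ∀ n m : ℤ, w n m ≠ 0)
    (hC5 : ∀ n m : ℤ,
      w n (m+1) = -((t n (m+1) + t n m + 1) / (t n m + 1)) * w n m)
    (S : ℤ → ℤ → ℝ)
    (hS : ∀ n m : ℤ, S n m =
      w n m * w (n+1) m + w (n+1) m * w n (m+1) + w n (m+1) * w (n+1) (m+1))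
    (hS0 : ∀ n m : ℤ, S n m ≠ 0) :
    (∀ n m : ℤ, S n (m+1) = S n m) ∧
    ∃ β : ℤ → ℝ, (∀ n : ℤ, β n ≠ -1) ∧
      ∀ n m : ℤ,
        w n m * w (n+1) m + w (n+1) m * w n (m+1)
          + w n (m+1) * w (n+1) (m+1) - (1 + β n) = 0 := by
  -- key identity: S_{n,m} (t_{n,m}+1) = w_{n,m} w_{n+1,m}
  have key : ∀ n m : ℤ, S n m * (t n m + 1) = w n m * w (n+1) m := by
    intro n m
    have h6 := hT n m
    have h1 := ht1 n m
    have h2 := ht1 (n+1) m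
    rw [hS n m, hC5 n m, hC5 (n+1) m]
    field_simp
    linear_combination (w n m * w (n+1) m) * h6
  have hstep : ∀ n m : ℤ, S n (m+1) = S n m := by
    intro n m
    have k1 := key n m
    have k2 := key n (m+1)
    have h6 := hT n m
    have h1 := ht1 n m
    have h2 := ht1 (n+1) m
    have h3 := ht1 n (m+1)
    rw [hC5 n m, hC5 (n+1) m] at k2
    field_simp at k2
    have cancel : S n (m+1) * ((t n m + 1) * (t n (m+1) + 1) * (t (n+1) m + 1))
        = S n m * ((t n m + 1) * (t n (m+1) + 1) * (t (n+1) m + 1)) := by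
      linear_combination k2 + (w n m * w (n+1) m) * h6
        - (t n (m+1) + 1) * (t (n+1) m + 1) * k1
    exact mul_right_cancel₀ (mul_ne_zero (mul_ne_zero h1 h3) h2) cancel
  have hconst : ∀ n m : ℤ, S n m = S n 0 := by
    intro n m
    induction m using Int.induction_on with
    | zero => rfl
    | succ k ih => rw [hstep n k, ih]
    | pred k ih => rw [← ih, ← hstep n (-(k:ℤ) - 1)]; norm_num
  refine ⟨hstep, fun n => S n 0 - 1, fun n h => hS0 n 0 (by simp only [] at h; linarith), fun n m => ?_⟩
  have := hconst n m
  rw [hS n m] at this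
  simp only []
  linarith
end

section
/- Let u : ℤ² → ℝ satisfy equation (kj11): (u_{n,m} + u_{n+1,m+1})·u_{n+1,m}·u_{n,m+1} + 1 = 0 for all (n,m) ∈ ℤ², with u_{n,m} ≠ 0 and u_{n−1,m} u_{n,m} u_{n+1,m} ≠ 1 for all (n,m). Define t_{n,m} := 1/(u_{n−1,m} u_{n,m} u_{n+1,m} − 1). Then t_{n,m} ≠ 0 and t_{n,m} + 1 ≠ 0 for all (n,m), and the following identities hold for all (n,m) ∈ ℤ²: (Amaryllis) u_{n+1,m} = (t_{n,m} + 1)/(t_{n,m}·u_{n−1,m}·u_{n,m}); (kj13) u_{n,m+1} = −((t_{n,m+1} + t_{n,m} + 1)/(t_{n,m} + 1))·u_{n−1,m}; and (kj14) u_{n−1,m+1} = (t_{n,m} + 1)/(t_{n,m+1}·u_{n−1,m}·u_{n,m}). -/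
/-- The Mikhailov–Xenitidis equation (kj11) for a field `u : ℤ² → ℝ`. -/
def Kj11 (u : ℤ → ℤ → ℝ) : Prop :=
  ∀ n m : ℤ,
    (u n m + u (n+1) (m+1)) * u (n+1) m * u n (m+1) + 1 = 0

/-- Theorem 5 of the paper: the identities (Amaryllis), (kj13), (kj14) for
the transformation (kj12) of (kj11). -/
theorem kj11_amaryllis_identities (u : ℤ → ℤ → ℝ) (hu : Kj11 u)
    (hu0 : ∀ n m : ℤ, u n m ≠ 0)
    (hu1 : ∀ n m : ℤ, u (n-1) m * u n m * u (n+1) m ≠ 1)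
    (t : ℤ → ℤ → ℝ)
    (ht : ∀ n m : ℤ, t n m = 1 / (u (n-1) m * u n m * u (n+1) m - 1)) :
    (∀ n m : ℤ, t n m ≠ 0) ∧
    (∀ n m : ℤ, t n m + 1 ≠ 0) ∧
    (∀ n m : ℤ, u (n+1) m = (t n m + 1) / (t n m * u (n-1) m * u n m)) ∧
    (∀ n m : ℤ,
      u n (m+1) = -((t n (m+1) + t n m + 1) / (t n m + 1)) * u (n-1) m) ∧
    (∀ n m : ℤ,
      u (n-1) (m+1) = (t n m + 1) / (t n (m+1) * u (n-1) m * u n m)) := by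
  have hX : ∀ n m : ℤ, u (n-1) m * u n m * u (n+1) m - 1 ≠ 0 :=
    fun n m => sub_ne_zero.mpr (hu1 n m)
  have ht0 : ∀ n m : ℤ, t n m ≠ 0 := fun n m => by
    rw [ht]; exact one_div_ne_zero (hX n m)
  have ht1 : ∀ n m : ℤ, t n m + 1 ≠ 0 := fun n m => by
    have : t n m + 1 = (u (n-1) m * u n m * u (n+1) m) /
        (u (n-1) m * u n m * u (n+1) m - 1) := by
      rw [ht]; field_simp [hX n m]; ring
    rw [this]
    exact div_ne_zero (by
      exact mul_ne_zero (mul_ne_zero (hu0 _ _) (hu0 _ _)) (hu0 _ _)) (hX n m)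
  refine ⟨ht0, ht1, ?_, ?_, ?_⟩
  · intro n m
    rw [ht]
    field_simp [hX n m, hu0 (n-1) m, hu0 n m]
    rw [mul_add, mul_one_div_cancel (by convert hX n m using 2; ring_nf)]; ring
  · intro n m
    have h1 := hu (n-1) m
    have h2 := hu n m
    have e : n - 1 + 1 = n := by ring
    rw [e] at h1
    rw [ht n (m+1), ht n m]
    have e2 : n + 1 - 1 = n := by ring
    field_simp [hX n m, hX n (m+1), hu0 (n-1) m, hu0 n m, ht0 n (m+1)]
    have B' : u n (m+1) * u (n-1) (m+1) * u (n+1) (m+1) - 1 ≠ 0 := by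
      convert hX n (m+1) using 2; ring_nf
    rw [add_sub_cancel, div_add_one B', eq_neg_iff_add_eq_zero]
    field_simp [B', hu0 (n-1) m, hu0 n m, hu0 (n+1) m]
    linear_combination (u (n+1) m * u n (m+1) * u (n+1) (m+1)) * h1 - h2
  · intro n m
    have h1 := hu (n-1) m
    have h2 := hu n m
    have e : n - 1 + 1 = n := by ring
    rw [e] at h1
    rw [ht n (m+1), ht n m]
    field_simp [hX n m, hX n (m+1), hu0 (n-1) m, hu0 n m, ht0 n (m+1)]
    linear_combination (u (n-1) m * u n m * u (n+1) m) * h1 -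
      (u (n-1) m * u n m * u (n-1) (m+1)) * h2
end

section
/- Let t : ℤ² → ℝ satisfy equation (Carandini6): (t_{n+1,m+1} + t_{n+1,m} + 1)(t_{n,m+1} + t_{n,m} + 1) − (t_{n+1,m} + 1)(t_{n,m+1} + 1) = 0 for all (n,m) ∈ ℤ², with t_{n,m} ≠ 0 for all (n,m). Define z_{n,m} := 1/t_{n,m}. Then z satisfies equation (kj16): z_{n,m} z_{n+1,m} + z_{n,m+1} z_{n+1,m+1} + z_{n+1,m} z_{n,m+1} (z_{n+1,m+1} + z_{n,m} + 1) = 0 for all (n,m) ∈ ℤ². -/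
/-- Equation (kj16) for a field `z : ℤ² → ℝ`. -/
def Kj16 (z : ℤ → ℤ → ℝ) : Prop :=
  ∀ n m : ℤ,
    z n m * z (n+1) m + z n (m+1) * z (n+1) (m+1)
      + z (n+1) m * z n (m+1) * (z (n+1) (m+1) + z n m + 1) = 0

/-- Theorem 6 of the paper: the inversion `z = 1/t` maps solutions of
(Carandini6) to solutions of (kj16). -/
theorem carandini6_to_kj16 (t : ℤ → ℤ → ℝ) (hT : Carandini6 t)
    (ht0 : ∀ n m : ℤ, t n m ≠ 0)
    (z : ℤ → ℤ → ℝ) (hz : ∀ n m : ℤ, z n m = 1 / t n m) :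
    Kj16 z := by
  intro n m
  have h := hT n m
  have h1 := ht0 n m
  have h2 := ht0 (n+1) m
  have h3 := ht0 n (m+1)
  have h4 := ht0 (n+1) (m+1)
  simp only [hz]
  field_simp
  linear_combination h
end

section
/- Let λ ∈ ℝ with λ ≠ 0, and let t : ℤ² → ℝ satisfy equation (Carandini6): (t_{n+1,m+1} + t_{n+1,m} + 1)(t_{n,m+1} + t_{n,m} + 1) − (t_{n+1,m} + 1)(t_{n,m+1} + 1) = 0 for all (n,m) ∈ ℤ², with t_{n,m} ≠ 0 and t_{n,m} + 1 ≠ 0 for all (n,m). Define the 3×3 real matrices M̃_{n,m} := [[0, 1 + 1/t_{n−1,m}, 0], [−1, −1 − 1/t_{n−1,m}, λ], [−1, 0, 1]] and Ñ_{n,m} := [[0, 0, 1], [1 + ρ_{n,m}, 0, −1 − ρ_{n,m}], [1/λ, −ρ_{n,m}/λ, 0]], where ρ_{n,m} := t_{n,m+1}·(t_{n−1,m} + 1)/(t_{n−1,m}·(t_{n,m} + 1)). Then the nonlocal Lax compatibility condition holds: for all (n,m) ∈ ℤ², M̃_{n,m+1}·Ñ_{n,m} = −((t_{n,m+1} + t_{n,m}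 + 1)/(t_{n,m} + 1))·Ñ_{n+1,m}·M̃_{n,m}. -/
set_option maxHeartbeats 2000000 in
/-- The nonlocal Lax compatibility condition (kk1) for the gauge-transformed
Lax matrices (kj18), (kj19) of equation (Carandini6). -/
theorem carandini6_nonlocal_lax (lam : ℝ) (hlam : lam ≠ 0)
    (t : ℤ → ℤ → ℝ) (hT : Carandini6 t)
    (ht0 : ∀ n m : ℤ, t n m ≠ 0) (ht1 : ∀ n m : ℤ, t n m + 1 ≠ 0)
    (ρ : ℤ → ℤ → ℝ)
    (hρ : ∀ n m : ℤ,
      ρ n m = t n (m+1) * (t (n-1) m + 1) / (t (n-1) m * (t n m + 1)))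
    (M N : ℤ → ℤ → Matrix (Fin 3) (Fin 3) ℝ)
    (hM : ∀ n m : ℤ, M n m =
      !![0, 1 + 1 / t (n-1) m, 0;
         -1, -1 - 1 / t (n-1) m, lam;
         -1, 0, 1])
    (hN : ∀ n m : ℤ, N n m =
      !![0, 0, 1;
         1 + ρ n m, 0, -1 - ρ n m;
         1 / lam, -ρ n m / lam, 0]) :
    ∀ n m : ℤ,
      M n (m+1) * N n m =
        (-((t n (m+1) + t n m + 1) / (t n m + 1))) • (N (n+1) m * M n m) := by
  intro n m
  have e1 := hT n m
  have e2 := hT (n-1) m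
  rw [sub_add_cancel] at e2
  set a := t (n-1) (m+1) with ha'
  set b := t (n-1) m with hb'
  set c := t n (m+1) with hc'
  set d := t n m with hd'
  set e := t (n+1) m with he'
  set f := t (n+1) (m+1) with hf'
  have hb : b ≠ 0 := ht0 _ _
  have hc : c ≠ 0 := ht0 _ _
  have hd : d ≠ 0 := ht0 _ _
  have ha : a ≠ 0 := ht0 _ _
  have hd1 : d + 1 ≠ 0 := ht1 _ _
  have hb1 : b + 1 ≠ 0 := ht1 _ _
  have he1 : e + 1 ≠ 0 := ht1 _ _
  have ha1 : a + 1 ≠ 0 := ht1 _ _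
  have hS : c + d + 1 ≠ 0 := by
    intro h
    apply hd1
    have : (d+1) * (a+1) = 0 := by linear_combination -e2 + (a+b+1) * h
    rcases mul_eq_zero.1 this with h' | h'
    · exact h'
    · exact absurd h' ha1
  have hA : a = ((d+1) - (c+d+1)*(b+1))/c := by
    field_simp
    linear_combination e2
  have hF : f = -(e+1)*d/(c+d+1) := by
    field_simp
    linear_combination e1
  have hr1 : ρ n m = c * (b + 1) / (b * (d + 1)) := by rw [hρ n m]
  have hr2 : ρ (n+1) m = -(d+1)/(c+d+1) := by
    rw [hρ (n+1) m]
    simp only [add_sub_cancel_right]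
    rw [← hd', ← he', ← hf', hF]
    field_simp
  have hac : d + 1 - (c + d + 1) * (b + 1) = a * c := by linear_combination -e2
  have hden : d + 1 - (c + d + 1) * (b + 1) ≠ 0 := by
    rw [hac]; exact mul_ne_zero ha hc
  rw [hM, hN, hN, hM, ← ha', ← hb', hr1, hr2, hA]
  ext i j
  fin_cases i <;> fin_cases j <;>
    simp [Matrix.mul_apply, Fin.sum_univ_succ, Matrix.smul_apply] <;>
    field_simp [hden] <;> ring
end
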